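/- (Theorem 1, monotone case) Let g : (k+1)^𝒳 → ℝ≥0 be a monotone normalized k-submodular function, w : 𝒳 → ℝ>0 a positive weight function, τ > 0 and ε ∈ (0,1], and suppose there exists a k-set v with g(v) ≥ τ and w(v) ≤ W̄. Then the k-set 𝐬 returned by Algorithm 1 with inputs (τ, W̄, ε) satisfies w(𝐬) ≤ ((3−ε)/(2ε))·W̄ and g(𝐬) ≥ (1−ε)τ/2. -/

import Mathlib

/-- A `k`-set: an assignment of each ground element to one of `k` parts or to none
(`none` meaning the element belongs to no part).  This encodes a tuple
`(S_1, …, S_k)` of pairwise disjoint subsets of `X`. -/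
abbrev KSet (X : Type*) (k : ℕ) := X → Option (Fin k)

namespace KSet

variable {X : Type*} {k : ℕ}

/-- The empty `k`-set `𝟎 = (∅, …, ∅)`. -/
def bot (X : Type*) (k : ℕ) : KSet X k := fun _ => none

/-- `le s t` is the partial order `s ⊑ t`, i.e. `Sᵢ ⊆ Tᵢ` for every `i ∈ [k]`. -/
def le (s t : KSet X k) : Prop := ∀ (x : X) (i : Fin k), s x = some i → t x = some i

/-- The meet `s ⊓ t`, whose `i`-th component is `Sᵢ ∩ Tᵢ`. -/
def meet (s t : KSet X k) : KSet X k := fun x => if s x = t x then s x else none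

/-- The join `s ⊔ t`, whose `i`-th component is `(Sᵢ ∪ Tᵢ) \ ⋃_{j ≠ i} (Sⱼ ∪ Tⱼ)`. -/
def join (s t : KSet X k) : KSet X k := fun x =>
  match s x, t x with
  | none, b => b
  | some i, none => some i
  | some i, some j => if i = j then some i else none

/-- The `k`-set `(x, i)` whose only nonempty component is `Sᵢ = {x}`. -/
def single [DecidableEq X] (x : X) (i : Fin k) : KSet X k :=
  fun y => if y = x then some i else none

/-- `s ⊔ (x, i)`: add the element `x` to the `i`-th part of `s`
(intended for `x ∉ E(s)`). -/
def add [DecidableEq X] (s : KSet X k) (x : X) (i : Fin k) : KSet X k :=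
  Function.update s x (some i)

end KSet

/-- The marginal gain `Δ_{x,i} g (s) = g (s ⊔ (x,i)) - g s`. -/
def marg {X : Type*} [DecidableEq X] {k : ℕ} (g : KSet X k → ℝ) (s : KSet X k)
    (x : X) (i : Fin k) : ℝ :=
  g (KSet.add s x i) - g s

/-- `g` is `k`-submodular: `g (s ⊓ t) + g (s ⊔ t) ≤ g s + g t` for all `k`-sets. -/
def KSubmodular {X : Type*} {k : ℕ} (g : KSet X k → ℝ) : Prop :=
  ∀ s t : KSet X k, g (KSet.meet s t) + g (KSet.join s t) ≤ g s + g t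

/-- `g` is monotone with respect to `⊑`. -/
def KMonotone {X : Type*} {k : ℕ} (g : KSet X k → ℝ) : Prop :=
  ∀ s t : KSet X k, KSet.le s t → g s ≤ g t

/-- The weight `w(s) = ∑_{x ∈ E(s)} w x` of a `k`-set. -/
def wtot {X : Type*} [Fintype X] {k : ℕ} (w : X → ℝ) (s : KSet X k) : ℝ :=
  ∑ x ∈ Finset.univ.filter (fun x => s x ≠ none), w x

/-- A greedy chain for `g`: `c 0 = 𝟎` and each step adds one new element at a
position maximizing the marginal gain over `i ∈ [k]`. -/
def GreedyChain {X : Type*} [DecidableEq X] {k : ℕ} (g : KSet X k → ℝ) (m : ℕ)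
    (c : ℕ → KSet X k) : Prop :=
  c 0 = KSet.bot X k ∧
  ∀ p, p < m → ∃ (xp : X) (ip : Fin k),
    c p xp = none ∧
    c (p + 1) = KSet.add (c p) xp ip ∧
    ∀ i : Fin k, marg g (c p) xp i ≤ marg g (c p) xp ip

/-- A choice of position in `[k]` maximizing `f`. -/
noncomputable def argmaxFin {k : ℕ} [NeZero k] (f : Fin k → ℝ) : Fin k :=
  Classical.choose (Finset.exists_max_image Finset.univ f
    ⟨⟨0, Nat.pos_of_ne_zero (NeZero.ne k)⟩, Finset.mem_univ _⟩)

open Classical in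
/-- One step of Algorithm 1, processing the arriving element `x` with current
solution `s`, threshold `τ`, density threshold `θ` and cost upper bound `A`:
if `x` is big (`w x ≤ A` and `max_i g((x,i)) ≥ τ`) then restart from `(x,i')`
with `i'` maximizing `g((x,i))`; otherwise add `(x,i')` with `i'` maximizing the
marginal gain, provided `Δ_{x,i'}g(s)/w(x) ≥ θ` and `w(s) + w(x) ≤ A`. -/
noncomputable def alg1Step {X : Type*} [Fintype X] [DecidableEq X] {k : ℕ} [NeZero k]
    (g : KSet X k → ℝ) (w : X → ℝ) (τ θ A : ℝ) (s : KSet X k) (x : X) : KSet X k :=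
  if w x ≤ A ∧ τ ≤ g (KSet.single x (argmaxFin fun i => g (KSet.single x i))) then
    KSet.single x (argmaxFin fun i => g (KSet.single x i))
  else if θ ≤ marg g s x (argmaxFin fun i => marg g s x i) / w x ∧ wtot w s + w x ≤ A then
    KSet.add s x (argmaxFin fun i => marg g s x i)
  else s

/-- Algorithm 1: starting from `𝟎`, process the elements of the ground set in
their arrival order `order`. -/
noncomputable def alg1 {X : Type*} [Fintype X] [DecidableEq X] {k : ℕ} [NeZero k]
    (g : KSet X k → ℝ) (w : X → ℝ) (τ θ A : ℝ) (order : List X) : KSet X k :=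
  order.foldl (alg1Step g w τ θ A) (KSet.bot X k)

/-- `x` is a big element: `w x ≤ A` and `max_{i ∈ [k]} g((x,i)) ≥ τ`. -/
def IsBig {X : Type*} [DecidableEq X] {k : ℕ} (g : KSet X k → ℝ) (w : X → ℝ)
    (τ A : ℝ) (x : X) : Prop :=
  w x ≤ A ∧ ∃ i : Fin k, τ ≤ g (KSet.single x i)

section Aux

variable {X : Type*} [Fintype X] [DecidableEq X] {k : ℕ}

lemma argmaxFin_spec [NeZero k] (f : Fin k → ℝ) (i : Fin k) : f i ≤ f (argmaxFin f) :=
  (Classical.choose_spec (Finset.exists_max_image Finset.univ f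
    ⟨⟨0, Nat.pos_of_ne_zero (NeZero.ne k)⟩, Finset.mem_univ _⟩)).2 i (Finset.mem_univ i)

lemma KSet.add_apply (s : KSet X k) (x : X) (i : Fin k) (y : X) :
    KSet.add s x i y = if y = x then some i else s y := Function.update_apply s x (some i) y

lemma KSet.le_refl (s : KSet X k) : KSet.le s s := fun _ _ h => h

lemma KSet.le_add (s : KSet X k) {x : X} (hx : s x = none) (i : Fin k) :
    KSet.le s (KSet.add s x i) := by
  intro y j hy
  rw [KSet.add_apply]
  rcases eq_or_ne y x with rfl | hne
  · rw [hx] at hy; exact absurd hy (by simp)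
  · rw [if_neg hne]; exact hy

lemma wtot_nonneg {w : X → ℝ} (hw : ∀ x, 0 < w x) (s : KSet X k) : 0 ≤ wtot w s :=
  Finset.sum_nonneg fun x _ => (hw x).le

lemma wtot_bot (w : X → ℝ) : wtot w (KSet.bot X k) = 0 := by
  simp [wtot, KSet.bot]

lemma wtot_single (w : X → ℝ) (x : X) (i : Fin k) : wtot w (KSet.single x i) = w x := by
  classical
  rw [wtot]
  rw [show (Finset.univ.filter fun y => KSet.single x i y ≠ none) = {x} by
    ext y; simp [KSet.single]]
  simp

lemma wtot_add {w : X → ℝ} {s : KSet X k} {x : X} (hx : s x = none) (i : Fin k) :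
    wtot w (KSet.add s x i) = wtot w s + w x := by
  classical
  rw [wtot, wtot]
  rw [show (Finset.univ.filter fun y => KSet.add s x i y ≠ none)
      = insert x (Finset.univ.filter fun y => s y ≠ none) by
    ext y
    rcases eq_or_ne y x with rfl | hne
    · simp [KSet.add_apply]
    · simp [KSet.add_apply, hne]]
  rw [Finset.sum_insert (by simp [hx])]
  ring

lemma wtot_add_le {w : X → ℝ} (hw : ∀ x, 0 < w x) (s : KSet X k) (x : X) (i : Fin k) :
    wtot w (KSet.add s x i) ≤ wtot w s + w x := by
  classical
  cases hx : s x with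
  | none => rw [wtot_add hx]
  | some j =>
      have : (Finset.univ.filter fun y => KSet.add s x i y ≠ none)
          = (Finset.univ.filter fun y => s y ≠ none) := by
        ext y
        rcases eq_or_ne y x with rfl | hne
        · simp [KSet.add_apply, hx]
        · simp [KSet.add_apply, hne]
      rw [wtot, this, ← wtot]
      linarith [ (hw x) ]

lemma marg_nonneg {g : KSet X k → ℝ} (hmono : KMonotone g) {s : KSet X k} {x : X}
    (hx : s x = none) (i : Fin k) : 0 ≤ marg g s x i := by
  have := hmono s (KSet.add s x i) (KSet.le_add s hx i)
  rw [marg]; linarith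

lemma le_none {s t : KSet X k} (h : KSet.le s t) {x : X} (hx : t x = none) : s x = none := by
  cases hsx : s x with
  | none => rfl
  | some j => rw [h x j hsx] at hx; exact absurd hx (by simp)

lemma orthant {g : KSet X k → ℝ} (hsub : KSubmodular g) {s t : KSet X k}
    (hst : KSet.le s t) {x : X} (hx : t x = none) (i : Fin k) :
    marg g t x i ≤ marg g s x i := by
  have hsx : s x = none := le_none hst hx
  have hmeet : KSet.meet (KSet.add s x i) t = s := by
    funext y
    rcases eq_or_ne y x with rfl | hne
    · simp [KSet.meet, KSet.add_apply, hx, hsx]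
    · simp only [KSet.meet, KSet.add_apply, if_neg hne]
      cases hsy : s y with
      | none => cases hty : t y <;> simp [hty]
      | some j => rw [hst y j hsy]; simp
  have hjoin : KSet.join (KSet.add s x i) t = KSet.add t x i := by
    funext y
    rcases eq_or_ne y x with rfl | hne
    · simp [KSet.join, KSet.add_apply, hx]
    · simp only [KSet.join, KSet.add_apply, if_neg hne]
      cases hsy : s y with
      | none => simp
      | some j => rw [hst y j hsy]; simp
  have := hsub (KSet.add s x i) t
  rw [hmeet, hjoin] at this
  simp only [marg]; linarith

end Aux
section Aux2
set_option linter.unusedSectionVars false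
variable {X : Type*} [Fintype X] [DecidableEq X] {k : ℕ}

/-- Override `s` by `v` outside the support of `s`. -/
def override (s v : KSet X k) : KSet X k := fun y => if s y = none then v y else s y

lemma le_override (s v : KSet X k) : KSet.le s (override s v) := by
  intro y j hy; simp [override, hy]

lemma ITY {g : KSet X k → ℝ} (hsub : KSubmodular g) (hmono : KMonotone g)
    (v : KSet X k) :
    ∀ (m : ℕ) (c : ℕ → KSet X k), GreedyChain g m c →
      g v ≤ g (override (c m) v) + (g (c m) - g (c 0)) := by
  intro m
  induction m with
  | zero =>
      intro c hc
      have h0 : override (c 0) v = v := by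
        funext y; simp [override, hc.1, KSet.bot]
      rw [h0]; simp
  | succ m ih =>
      intro c hc
      have hc' : GreedyChain g m c := ⟨hc.1, fun p hp => hc.2 p (by omega)⟩
      have hih := ih c hc'
      obtain ⟨x, i, hxnone, hstep, hmax⟩ := hc.2 m (Nat.lt_succ_self m)
      set s := c m with hs
      -- the intermediate k-set t : override s v with x removed
      set t : KSet X k := fun y => if y = x then none else override s v y with ht
      have htx : t x = none := by simp [ht]
      have hst : KSet.le s t := by
        intro y j hy
        have hyx : y ≠ x := by rintro rfl; rw [hxnone] at hy; exact absurd hy (by simp)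
        simp [ht, hyx, override, hy]
      have hb : override (c (m+1)) v = KSet.add t x i := by
        funext y
        rcases eq_or_ne y x with rfl | hne
        · simp [override, hstep, KSet.add_apply]
        · simp [override, hstep, KSet.add_apply, hne, ht]
      have key : g (override s v) - g (override (c (m+1)) v) ≤ g (c (m+1)) - g s := by
        have hrhs : g (c (m+1)) - g s = marg g s x i := by rw [hstep, marg]
        rw [hrhs, hb]
        cases hvx : v x with
        | none =>
            have ha : override s v = t := by
              funext y
              rcases eq_or_ne y x with rfl | hne
              · simp [ht, override, hxnone, hvx]
              · simp [ht, hne]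
            rw [ha]
            have h1 : 0 ≤ marg g t x i := marg_nonneg hmono htx i
            have h2 : marg g t x i ≤ marg g s x i := orthant hsub hst htx i
            simp only [marg] at h1 h2 ⊢; linarith
        | some i' =>
            have ha : override s v = KSet.add t x i' := by
              funext y
              rcases eq_or_ne y x with rfl | hne
              · simp [override, hxnone, hvx, KSet.add_apply]
              · simp [ht, hne, KSet.add_apply]
            rw [ha]
            have hmono1 : g t ≤ g (KSet.add t x i) :=
              hmono t _ (KSet.le_add t htx i)
            have h2 : marg g t x i' ≤ marg g s x i' := orthant hsub hst htx i'
            have h3 : marg g s x i' ≤ marg g s x i := hmax i'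
            simp only [marg] at h2 h3 ⊢; linarith
      linarith
end Aux2
section Aux3
set_option linter.unusedSectionVars false
variable {X : Type*} [Fintype X] [DecidableEq X] {k : ℕ}

/-- Partial override of `s` by `v` on the set `D`. -/
def ovD (s v : KSet X k) (D : Finset X) : KSet X k :=
  fun y => if s y = none ∧ y ∈ D then v y else s y

lemma ovD_univ (s v : KSet X k) : ovD s v Finset.univ = override s v := by
  funext y; simp [ovD, override]

lemma le_ovD (s v : KSet X k) (D : Finset X) : KSet.le s (ovD s v D) := by
  intro y j hy; simp [ovD, hy]

lemma ovD_bound {g : KSet X k → ℝ} (hsub : KSubmodular g) (hmono : KMonotone g)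
    (s v : KSet X k) (B : X → ℝ)
    (hB : ∀ x, s x = none → v x ≠ none → ∀ i, marg g s x i ≤ B x) :
    ∀ D : Finset X,
      g (ovD s v D) ≤ g s + ∑ x ∈ D.filter (fun x => s x = none ∧ v x ≠ none), B x := by
  intro D
  induction D using Finset.induction_on with
  | empty =>
      have : ovD s v ∅ = s := by funext y; simp [ovD]
      simp [this]
  | @insert a D ha ih =>
      by_cases hcond : s a = none ∧ v a ≠ none
      · obtain ⟨hsa, hva⟩ := hcond
        obtain ⟨i, hi⟩ : ∃ i, v a = some i := Option.ne_none_iff_exists'.mp hva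
        have heq : ovD s v (insert a D) = KSet.add (ovD s v D) a i := by
          funext y
          rcases eq_or_ne y a with rfl | hne
          · simp [ovD, KSet.add_apply, hsa, ha, hi]
          · simp [ovD, KSet.add_apply, hne]
        have hDa : ovD s v D a = none := by simp [ovD, ha, hsa]
        have hmarg : marg g (ovD s v D) a i ≤ marg g s a i :=
          orthant hsub (le_ovD s v D) hDa i
        have hBa := hB a hsa hva i
        have hfil : (insert a D).filter (fun x => s x = none ∧ v x ≠ none)
            = insert a (D.filter (fun x => s x = none ∧ v x ≠ none)) := by
          rw [Finset.filter_insert, if_pos ⟨hsa, hva⟩]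
        rw [heq, hfil, Finset.sum_insert (by simp [ha])]
        simp only [marg] at hmarg hBa
        linarith
      · have heq : ovD s v (insert a D) = ovD s v D := by
          funext y
          rcases eq_or_ne y a with rfl | hne
          · rcases Classical.em (s y = none) with hsy | hsy
            · have hvy : v y = none := by
                by_contra hvy; exact hcond ⟨hsy, hvy⟩
              simp [ovD, hsy, hvy]
            · simp [ovD, hsy]
          · simp [ovD, hne]
        have hfil : (insert a D).filter (fun x => s x = none ∧ v x ≠ none)
            = D.filter (fun x => s x = none ∧ v x ≠ none) := by
          rw [Finset.filter_insert, if_neg hcond]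
        rw [heq, hfil]; exact ih
end Aux3
section Aux4
set_option linter.unusedSectionVars false
variable {X : Type*} [Fintype X] [DecidableEq X] {k : ℕ} [NeZero k]
variable {g : KSet X k → ℝ} {w : X → ℝ} {τ θ A : ℝ}

lemma stepW (hw : ∀ x, 0 < w x) (s : KSet X k) (x : X) (h : wtot w s ≤ A) :
    wtot w (alg1Step g w τ θ A s x) ≤ A := by
  unfold alg1Step
  split_ifs with h1 h2
  · rw [wtot_single]; exact h1.1
  · exact le_trans (wtot_add_le hw s x _) h2.2
  · exact h

lemma foldW (hw : ∀ x, 0 < w x) :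
    ∀ (l : List X) (s : KSet X k), wtot w s ≤ A →
      wtot w (l.foldl (alg1Step g w τ θ A) s) ≤ A := by
  intro l
  induction l with
  | nil => intro s h; exact h
  | cons x l ih => intro s h; rw [List.foldl_cons]; exact ih _ (stepW hw s x h)

lemma stepA_tau (hw : ∀ x, 0 < w x) (hθ : 0 ≤ θ) (s : KSet X k) (x : X)
    (h : τ ≤ g s) : τ ≤ g (alg1Step g w τ θ A s x) := by
  unfold alg1Step
  split_ifs with h1 h2
  · exact h1.2
  · have hwx := hw x
    have h3 := (le_div_iff₀ hwx).mp h2.1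
    have hθw : 0 ≤ θ * w x := mul_nonneg hθ hwx.le
    rw [marg] at h3
    linarith
  · exact h

lemma stepA_big (s : KSet X k) {x : X} (hb : IsBig g w τ A x) :
    τ ≤ g (alg1Step g w τ θ A s x) := by
  obtain ⟨hwx, i, hi⟩ := hb
  have hmax : τ ≤ g (KSet.single x (argmaxFin fun i => g (KSet.single x i))) :=
    le_trans hi (argmaxFin_spec (fun i => g (KSet.single x i)) i)
  unfold alg1Step
  rw [if_pos ⟨hwx, hmax⟩]
  exact hmax

lemma foldA (hw : ∀ x, 0 < w x) (hθ : 0 ≤ θ) :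
    ∀ (l : List X) (s : KSet X k),
      ((∃ x ∈ l, IsBig g w τ A x) ∨ τ ≤ g s) →
      τ ≤ g (l.foldl (alg1Step g w τ θ A) s) := by
  intro l
  induction l with
  | nil =>
      intro s h
      rcases h with ⟨x, hx, _⟩ | h
      · exact absurd hx List.not_mem_nil
      · exact h
  | cons x l ih =>
      intro s h
      rw [List.foldl_cons]
      rcases h with ⟨y, hy, hbig⟩ | h
      · rcases List.mem_cons.mp hy with rfl | hyl
        · exact ih _ (Or.inr (stepA_big s hbig))
        · exact ih _ (Or.inl ⟨y, hyl, hbig⟩)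
      · exact ih _ (Or.inr (stepA_tau hw hθ s x h))

lemma caseB_run (hsub : KSubmodular g) (hmono : KMonotone g)
    (hw : ∀ x, 0 < w x) (hθ : 0 ≤ θ) :
    ∀ (l : List X) (s : KSet X k), l.Nodup →
      (∀ x ∈ l, ¬ IsBig g w τ A x) →
      (∀ x ∈ l, s x = none) →
      wtot w s ≤ A →
      θ * wtot w s ≤ g s →
      (∃ m c, GreedyChain g m c ∧ c m = s) →
      (∀ x, x ∉ l → s x = none →
        (∀ i, marg g s x i ≤ θ * w x) ∨ A < wtot w s + w x) →
      (θ * wtot w (l.foldl (alg1Step g w τ θ A) s) ≤ g (l.foldl (alg1Step g w τ θ A) s)) ∧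
      (∃ m c, GreedyChain g m c ∧ c m = l.foldl (alg1Step g w τ θ A) s) ∧
      (∀ x, l.foldl (alg1Step g w τ θ A) s x = none →
        (∀ i, marg g (l.foldl (alg1Step g w τ θ A) s) x i ≤ θ * w x) ∨
        A < wtot w (l.foldl (alg1Step g w τ θ A) s) + w x) := by
  intro l
  induction l with
  | nil =>
      intro s _ _ _ _ hJ2 hchain hJ4
      exact ⟨hJ2, hchain, fun x hx => hJ4 x List.not_mem_nil hx⟩
  | cons x l ih =>
      intro s hnodup hnobig hsupp hJ1 hJ2 hchain hJ4
      rw [List.foldl_cons]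
      have hxl : x ∉ l := (List.nodup_cons.mp hnodup).1
      have hsx : s x = none := hsupp x List.mem_cons_self
      have hif : ¬(w x ≤ A ∧ τ ≤ g (KSet.single x (argmaxFin fun i => g (KSet.single x i)))) :=
        fun h => hnobig x List.mem_cons_self ⟨h.1, _, h.2⟩
      set i' := argmaxFin (fun i => marg g s x i) with hi'
      have hstep : alg1Step g w τ θ A s x =
          if θ ≤ marg g s x i' / w x ∧ wtot w s + w x ≤ A
          then KSet.add s x i' else s := by
        unfold alg1Step
        rw [if_neg hif]
      by_cases hc : θ ≤ marg g s x i' / w x ∧ wtot w s + w x ≤ A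
      · -- element added
        rw [hstep, if_pos hc]
        have hle : KSet.le s (KSet.add s x i') := KSet.le_add s hsx i'
        have hmargθ : θ * w x ≤ marg g s x i' := by
          have := (le_div_iff₀ (hw x)).mp hc.1
          linarith
        have hwadd : wtot w (KSet.add s x i') = wtot w s + w x := wtot_add hsx i'
        apply ih _ (List.nodup_cons.mp hnodup).2
          (fun y hy => hnobig y (List.mem_cons_of_mem x hy))
        · -- support
          intro y hy
          have hyx : y ≠ x := fun h => hxl (h ▸ hy)
          rw [KSet.add_apply, if_neg hyx]
          exact hsupp y (List.mem_cons_of_mem x hy)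
        · rw [hwadd]; exact hc.2
        · rw [hwadd]
          simp only [marg] at hmargθ
          have : θ * (wtot w s + w x) = θ * wtot w s + θ * w x := by ring
          rw [this]
          linarith
        · -- chain extension
          obtain ⟨m, c, hgc, hcm⟩ := hchain
          refine ⟨m + 1, Function.update c (m + 1) (KSet.add s x i'), ?_,
            Function.update_self _ _ _⟩
          constructor
          · rw [Function.update_of_ne (by omega)]; exact hgc.1
          · intro p hp
            rcases Nat.lt_or_ge p m with hpm | hpm
            · obtain ⟨xp, ip, h1, h2, h3⟩ := hgc.2 p hpm
              refine ⟨xp, ip, ?_, ?_, ?_⟩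
              · rw [Function.update_of_ne (by omega)]; exact h1
              · rw [Function.update_of_ne (by omega : p + 1 ≠ m + 1),
                  Function.update_of_ne (by omega : p ≠ m + 1)]
                exact h2
              · intro i
                rw [Function.update_of_ne (by omega : p ≠ m + 1)]
                exact h3 i
            · have hpm' : p = m := by omega
              subst hpm'
              refine ⟨x, i', ?_, ?_, ?_⟩
              · rw [Function.update_of_ne (by omega), hcm]; exact hsx
              · rw [Function.update_self, Function.update_of_ne (by omega), hcm]
              · intro i
                rw [Function.update_of_ne (by omega), hcm]
                exact argmaxFin_spec (fun i => marg g s x i) i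
        · -- J4
          intro y hy hys'
          rcases eq_or_ne y x with rfl | hyx
          · rw [KSet.add_apply, if_pos rfl] at hys'
            exact absurd hys' (by simp)
          · have hysy : s y = none := by
              rw [KSet.add_apply, if_neg hyx] at hys'; exact hys'
            have hy' : y ∉ x :: l := by
              intro hmem
              rcases List.mem_cons.mp hmem with h | h
              · exact hyx h
              · exact hy h
            rcases hJ4 y hy' hysy with hden | hcap
            · left
              intro i
              exact le_trans (orthant hsub hle hys' i) (hden i)
            · right
              rw [hwadd]
              have := hw x
              linarith
      · -- element rejected, state unchanged
        rw [hstep, if_neg hc]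
        apply ih _ (List.nodup_cons.mp hnodup).2
          (fun y hy => hnobig y (List.mem_cons_of_mem x hy))
          (fun y hy => hsupp y (List.mem_cons_of_mem x hy))
          hJ1 hJ2 hchain
        -- J4
        intro y hy hys
        rcases eq_or_ne y x with rfl | hyx
        · -- the element just rejected
          rcases not_and_or.mp hc with hden | hcap
          · left
            intro i
            have h1 : marg g s y i ≤ marg g s y i' :=
              argmaxFin_spec (fun i => marg g s y i) i
            have h2 : marg g s y i' / w y < θ := lt_of_not_ge hden
            have h3 : marg g s y i' < θ * w y := by
              have := (div_lt_iff₀ (hw y)).mp h2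
              linarith
            linarith
          · right; exact lt_of_not_ge hcap
        · -- previously processed elements
          have hy' : y ∉ x :: l := by
            intro hmem
            rcases List.mem_cons.mp hmem with h | h
            · exact hyx h
            · exact hy h
          exact hJ4 y hy' hys
end Aux4
/-- **Theorem 1, monotone case.** If `g` is monotone normalized
`k`-submodular, `w > 0`, `τ > 0`, `ε ∈ (0,1]` and some `k`-set `v` has
`g v ≥ τ` and `w(v) ≤ W̄`, then the output `𝐬` of Algorithm 1 with inputs
`(τ, W̄, ε)` satisfies `w(𝐬) ≤ ((3-ε)/(2ε))·W̄` and `g 𝐬 ≥ (1-ε)τ/2`. -/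
theorem theorem1_monotone {X : Type*} [Fintype X] [DecidableEq X] {k : ℕ} [NeZero k]
    (g : KSet X k → ℝ) (hnn : ∀ s : KSet X k, 0 ≤ g s) (hsub : KSubmodular g)
    (hmono : KMonotone g) (hnorm : g (KSet.bot X k) = 0)
    (w : X → ℝ) (hw : ∀ x, 0 < w x)
    (τ Wbar ε : ℝ) (hτ : 0 < τ) (hW : 0 < Wbar) (hε0 : 0 < ε) (hε1 : ε ≤ 1)
    (v : KSet X k) (hgv : τ ≤ g v) (hwv : wtot w v ≤ Wbar)
    (order : List X) (hnodup : order.Nodup) (hfull : ∀ x : X, x ∈ order) :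
    wtot w (alg1 g w τ (ε * τ / Wbar) ((3 - ε) / (2 * ε) * Wbar) order) ≤
        (3 - ε) / (2 * ε) * Wbar ∧
      (1 - ε) * τ / 2 ≤ g (alg1 g w τ (ε * τ / Wbar) ((3 - ε) / (2 * ε) * Wbar) order) := by
  set θ := ε * τ / Wbar with hθdef
  set A := (3 - ε) / (2 * ε) * Wbar with hAdef
  have hθ0 : 0 ≤ θ := le_of_lt (div_pos (mul_pos hε0 hτ) hW)
  have hA0 : 0 < A := mul_pos (div_pos (by linarith) (by linarith)) hW
  have halg : alg1 g w τ θ A order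
      = order.foldl (alg1Step g w τ θ A) (KSet.bot X k) := rfl
  rw [halg]
  set sf := order.foldl (alg1Step g w τ θ A) (KSet.bot X k) with hsf
  have hbot0 : wtot w (KSet.bot X k) ≤ A := by rw [wtot_bot]; exact hA0.le
  refine ⟨foldW hw order _ hbot0, ?_⟩
  by_cases hbig : ∃ x ∈ order, IsBig g w τ A x
  · have hτf : τ ≤ g sf := foldA hw hθ0 order _ (Or.inl hbig)
    nlinarith
  · push_neg at hbig
    obtain ⟨hJ2, ⟨m, c, hgc, hcm⟩, hJ4⟩ :=
      caseB_run hsub hmono hw hθ0 order (KSet.bot X k) hnodup hbig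
        (fun x _ => rfl) hbot0
        (by rw [wtot_bot, hnorm]; simp)
        ⟨0, fun _ => KSet.bot X k, ⟨rfl, fun p hp => absurd hp (Nat.not_lt_zero p)⟩, rfl⟩
        (fun x hx _ => absurd (hfull x) hx)
    rw [← hsf] at hJ2 hJ4 hcm
    by_cases hcap : ∃ x, v x ≠ none ∧ sf x = none ∧ A < wtot w sf + w x
    · obtain ⟨x, hvx, hsfx, hlt⟩ := hcap
      have hwxW : w x ≤ wtot w v := by
        rw [wtot]
        exact Finset.single_le_sum (f := w) (fun y _ => (hw y).le) (by simp [hvx])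
      have h1 : A - Wbar ≤ wtot w sf := by linarith
      have h2 : θ * (A - Wbar) ≤ θ * wtot w sf := mul_le_mul_of_nonneg_left h1 hθ0
      have hAW : θ * (A - Wbar) = (3 - 3 * ε) * τ / 2 := by
        rw [hθdef, hAdef]
        field_simp
        ring
      nlinarith
    · push_neg at hcap
      have hden : ∀ x, sf x = none → v x ≠ none → ∀ i, marg g sf x i ≤ θ * w x := by
        intro x hsfx hvx i
        rcases hJ4 x hsfx with hd | hc
        · exact hd i
        · exact absurd hc (not_lt.mpr (hcap x hvx hsfx))
      have hITY := ITY hsub hmono v m c hgc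
      rw [hcm, hgc.1, hnorm] at hITY
      have hov := ovD_bound hsub hmono sf v (fun x => θ * w x) hden Finset.univ
      rw [ovD_univ] at hov
      have hsum : ∑ x ∈ Finset.univ.filter (fun x => sf x = none ∧ v x ≠ none), θ * w x
          ≤ θ * Wbar := by
        have hsub' : (Finset.univ.filter fun x => sf x = none ∧ v x ≠ none)
            ⊆ (Finset.univ.filter fun x => v x ≠ none) := by
          intro y hy
          simp only [Finset.mem_filter, Finset.mem_univ, true_and] at hy ⊢
          exact hy.2
        calc ∑ x ∈ Finset.univ.filter (fun x => sf x = none ∧ v x ≠ none), θ * w x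
            ≤ ∑ x ∈ Finset.univ.filter (fun x => v x ≠ none), θ * w x :=
              Finset.sum_le_sum_of_subset_of_nonneg hsub'
                (fun y _ _ => mul_nonneg hθ0 (hw y).le)
          _ = θ * wtot w v := by rw [wtot, Finset.mul_sum]
          _ ≤ θ * Wbar := mul_le_mul_of_nonneg_left hwv hθ0
      have hθW : θ * Wbar = ε * τ := by
        rw [hθdef]; field_simp
      linarith
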